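/- (Degenerate hindsight yields a cross-entropy gradient, Section 3.3.4.) Fix a state s_t ∈ S, rewards r : ℕ → ℝ with Σ_{k=t}^∞ γ^{k−t}·|r_k| < ∞ where 0 ≤ γ < 1, and a future-state-independent credit distribution h̄ : A → ℝ with h̄(a) ≥ 0 and Σ_{a∈A} h̄(a) = 1. Let θ ↦ q_θ : A → ℝ be a differentiable family with q_θ(a) > 0 for all a and θ ∈ ℝ^d (representing π_θ(·|s_t)). Then the HCA policy update for state s_t satisfies Σ_{a∈A} ∇_θ log q_θ(a) · Σ_{k=t}^∞ γ^{k−t}·h̄(a)·r_k = G_t · Σ_{a∈A} h̄(a)·∇_θ log q_θ(a) = −G_t · ∇_θ H(h̄, q_θ), where G_t := Σ_{k=t}^∞ γ^{k−t}·r_k is the discounted return and H(h̄, q_θ) := −Σ_{a∈A} h̄(a)·log q_θ(a) is the cross-entropy of q_θ relative to h̄. In particular, when G_t > 0 the update is a descent direction for the cross-entropy H(h̄, q_θ), and when G_t < 0 it is an ascent direction. -/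

import Mathlib

open Finset

/-- degenerate hindsight yields a cross-entropy gradient.  If the credit
distribution `h̄` is independent of the future state, the HCA policy update for a state
`s_t` equals `G_t` times the `h̄`-weighted sum of score functions, which is `−G_t` times
the gradient of the cross-entropy `H(h̄, q_θ) = −∑_a h̄(a)·log q_θ(a)`.  Here
`G_t = ∑_{k=t}^∞ γ^{k−t} r_k` (reindexed by `j = k − t`) and absolute convergence of the
return is assumed. -/
theorem degenerate_hindsight_cross_entropy_gradient
    {S A : Type*} [Fintype S] [Fintype A] [Nonempty S] [Nonempty A]
    (sState : S) (γ : ℝ) (hγ0 : 0 ≤ γ) (hγ1 : γ < 1) (t : ℕ) (r : ℕ → ℝ)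
    (hsum : Summable fun j : ℕ => γ ^ j * |r (t + j)|)
    (hb : A → ℝ) (hb0 : ∀ a, 0 ≤ hb a) (hb1 : ∑ a, hb a = 1)
    (d : ℕ) (qθ : EuclideanSpace ℝ (Fin d) → A → ℝ)
    (hqpos : ∀ θ a, 0 < qθ θ a)
    (hqdiff : ∀ a, Differentiable ℝ fun θ => qθ θ a)
    (θ : EuclideanSpace ℝ (Fin d)) :
    (∑ a, (∑' j : ℕ, γ ^ j * (hb a * r (t + j))) •
        fderiv ℝ (fun θ' => Real.log (qθ θ' a)) θ) =
      (∑' j : ℕ, γ ^ j * r (t + j)) •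
        ∑ a, hb a • fderiv ℝ (fun θ' => Real.log (qθ θ' a)) θ ∧
    (∑' j : ℕ, γ ^ j * r (t + j)) •
        ∑ a, hb a • fderiv ℝ (fun θ' => Real.log (qθ θ' a)) θ =
      (-(∑' j : ℕ, γ ^ j * r (t + j))) •
        fderiv ℝ (fun θ' => -∑ a, hb a * Real.log (qθ θ' a)) θ := by
  have hlogdiff : ∀ a, DifferentiableAt ℝ (fun θ' => Real.log (qθ θ' a)) θ := fun a =>
    ((hqdiff a).differentiableAt).log (ne_of_gt (hqpos θ a))
  constructor
  · have hG : ∀ a, (∑' j : ℕ, γ ^ j * (hb a * r (t + j))) =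
        hb a * ∑' j : ℕ, γ ^ j * r (t + j) := by
      intro a
      rw [← tsum_mul_left]
      congr 1; ext j; ring
    rw [Finset.smul_sum]
    refine Finset.sum_congr rfl fun a _ => ?_
    rw [hG, mul_comm, mul_smul, smul_smul, mul_comm]
  · have hfd : fderiv ℝ (fun θ' => -∑ a, hb a * Real.log (qθ θ' a)) θ =
        -∑ a, hb a • fderiv ℝ (fun θ' => Real.log (qθ θ' a)) θ := by
      rw [fderiv_fun_neg]
      congr 1
      rw [fderiv_fun_sum (fun a _ => ((hlogdiff a).const_mul (hb a)))]
      refine Finset.sum_congr rfl fun a _ => ?_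
      rw [fderiv_const_mul (hlogdiff a)]
    rw [hfd, smul_neg, neg_smul, neg_neg]
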